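/- Let 𝒟 be a finite σ-structure. Suppose that for i = 1, 2, hᵢ is a Uᵢ-surjective Xᵢ-total surjective hyper-endomorphism of 𝒟 where |Uᵢ| is minimal among cardinalities of subsets U of D such that 𝒟 has a U-surjective surjective hyper-endomorphism, |Xᵢ| is minimal among cardinalities of subsets X of D such that 𝒟 has an X-total surjective hyper-endomorphism, and, subject to these minimality conditions, |Uᵢ ∩ Xᵢ| is maximal. Then the substructure of 𝒟 induced by U₁ ∪ X₁ is isomorphic to the substructure of 𝒟 induced by U₂ ∪ X₂ (i.e. the U-X-core of 𝒟 is unique up to isomorphism). -/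

import Mathlib

namespace MC

/-- `f` is a surjective hyper-endomorphism of `(D, I)`: total, surjective and
preserving all relations. -/
def IsSHE {σ : Type} {ar : σ → ℕ} {D : Type}
    (I : ∀ r : σ, (Fin (ar r) → D) → Prop) (f : D → Set D) : Prop :=
  (∀ a : D, (f a).Nonempty) ∧ (∀ b : D, ∃ a : D, b ∈ f a) ∧
  ∀ (r : σ) (t : Fin (ar r) → D), I r t →
    ∀ s : Fin (ar r) → D, (∀ i, s i ∈ f (t i)) → I r s

/-- `f` is `U`-surjective: every element is in the image of some element of `U`. -/
def USurjective {D : Type} (f : D → Set D) (U : Set D) : Prop :=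
  ∀ b : D, ∃ u ∈ U, b ∈ f u

/-- `f` is `X`-total: the image of every element meets `X`. -/
def XTotal {D : Type} (f : D → Set D) (X : Set D) : Prop :=
  ∀ a : D, ∃ x ∈ X, x ∈ f a

section Helpers

variable {σ : Type} {ar : σ → ℕ} {D : Type}
variable {I : ∀ r : σ, (Fin (ar r) → D) → Prop}

/-- Composition of hyper-operations. -/
def comp (f g : D → Set D) : D → Set D := fun a => {c | ∃ b ∈ g a, c ∈ f b}

/-- Identity hyper-operation. -/
def cid : D → Set D := fun a => {a}

/-- Powers of a hyper-operation. -/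
def cpow (f : D → Set D) : ℕ → D → Set D
  | 0 => cid
  | n + 1 => comp f (cpow f n)

lemma comp_cid (f : D → Set D) : comp f cid = f := by
  funext a; ext c
  constructor
  · rintro ⟨b, hb, hc⟩
    rcases hb with rfl
    exact hc
  · intro hc; exact ⟨a, rfl, hc⟩

lemma cid_comp (f : D → Set D) : comp cid f = f := by
  funext a; ext c
  constructor
  · rintro ⟨b, hb, hc⟩
    rcases hc with rfl
    exact hb
  · intro hc; exact ⟨c, hc, rfl⟩

lemma comp_assoc (f g h : D → Set D) : comp (comp f g) h = comp f (comp g h) := by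
  funext a; ext c
  constructor
  · rintro ⟨b, hb, d, hd, hc⟩
    exact ⟨d, ⟨b, hb, hd⟩, hc⟩
  · rintro ⟨d, ⟨b, hb, hd⟩, hc⟩
    exact ⟨b, hb, d, hd, hc⟩

lemma isSHE_cid : IsSHE I cid := by
  refine ⟨fun a => ⟨a, rfl⟩, fun b => ⟨b, rfl⟩, ?_⟩
  intro r t ht s hs
  have : s = t := funext fun i => hs i
  rwa [this]

lemma isSHE_comp {f g : D → Set D} (hf : IsSHE I f) (hg : IsSHE I g) :
    IsSHE I (comp f g) := by
  obtain ⟨hf1, hf2, hf3⟩ := hf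
  obtain ⟨hg1, hg2, hg3⟩ := hg
  refine ⟨?_, ?_, ?_⟩
  · intro a
    obtain ⟨b, hb⟩ := hg1 a
    obtain ⟨c, hc⟩ := hf1 b
    exact ⟨c, b, hb, hc⟩
  · intro b
    obtain ⟨a, ha⟩ := hf2 b
    obtain ⟨a', ha'⟩ := hg2 a
    exact ⟨a', a, ha', ha⟩
  · intro r t ht s hs
    choose b hb1 hb2 using hs
    exact hf3 r b (hg3 r t ht b hb1) s hb2

lemma isSHE_cpow {f : D → Set D} (hf : IsSHE I f) (n : ℕ) : IsSHE I (cpow f n) := by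
  induction n with
  | zero => exact isSHE_cid
  | succ n ih => exact isSHE_comp hf ih

lemma cpow_comm (f : D → Set D) (n : ℕ) : comp f (cpow f n) = comp (cpow f n) f := by
  induction n with
  | zero => rw [show cpow f 0 = cid from rfl, comp_cid, cid_comp]
  | succ n ih =>
      show comp f (comp f (cpow f n)) = comp (comp f (cpow f n)) f
      rw [ih, ← comp_assoc, ih]

lemma cpow_succ' (f : D → Set D) (n : ℕ) : cpow f (n + 1) = comp (cpow f n) f := by
  show comp f (cpow f n) = _
  rw [cpow_comm]

lemma cpow_add (f : D → Set D) (m n : ℕ) :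
    cpow f (m + n) = comp (cpow f m) (cpow f n) := by
  induction n with
  | zero => rw [Nat.add_zero, show cpow f 0 = cid from rfl, comp_cid]
  | succ n ih =>
      show cpow f ((m + n) + 1) = comp (cpow f m) (comp f (cpow f n))
      show comp f (cpow f (m + n)) = _
      rw [ih, ← comp_assoc, show comp f (cpow f m) = comp (cpow f m) f from cpow_comm f m, comp_assoc]

lemma usurj_comp {f g : D → Set D} {U : Set D} (hU : USurjective g U)
    (hf : ∀ b : D, ∃ a : D, b ∈ f a) : USurjective (comp f g) U := by
  intro d
  obtain ⟨a, ha⟩ := hf d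
  obtain ⟨u, hu, hau⟩ := hU a
  exact ⟨u, hu, a, hau, ha⟩

lemma xtotal_comp {f g : D → Set D} {X : Set D} (hX : XTotal f X)
    (hg : ∀ a : D, (g a).Nonempty) : XTotal (comp f g) X := by
  intro a
  obtain ⟨b, hb⟩ := hg a
  obtain ⟨x, hx, hxb⟩ := hX b
  exact ⟨x, hx, b, hb, hxb⟩

lemma usurj_cpow {f : D → Set D} {U : Set D} (hf : IsSHE I f) (hU : USurjective f U)
    (n : ℕ) : USurjective (cpow f (n + 1)) U := by
  rw [cpow_succ']
  exact usurj_comp hU (isSHE_cpow (I := I) hf n).2.1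

lemma xtotal_cpow {f : D → Set D} {X : Set D} (hf : IsSHE I f) (hX : XTotal f X)
    (n : ℕ) : XTotal (cpow f (n + 1)) X := by
  show XTotal (comp f (cpow f n)) X
  exact xtotal_comp hX (isSHE_cpow (I := I) hf n).1

lemma exists_idem_pow [Finite D] (f : D → Set D) :
    ∃ n, 0 < n ∧ comp (cpow f n) (cpow f n) = cpow f n := by
  obtain ⟨i, j, hne, heq⟩ := Finite.exists_ne_map_eq_of_infinite (fun n : ℕ => cpow f n)
  wlog hij : i < j generalizing i j
  · exact this j i hne.symm heq.symm (by omega)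
  set m := j - i with hm
  have hmpos : 0 < m := by omega
  have stab : ∀ s, cpow f (i + s) = cpow f (j + s) := by
    intro s
    induction s with
    | zero => simpa using heq
    | succ s ih =>
        have h1 : i + (s + 1) = (i + s) + 1 := by omega
        have h2 : j + (s + 1) = (j + s) + 1 := by omega
        rw [h1, h2]
        show comp f (cpow f (i + s)) = comp f (cpow f (j + s))
        rw [ih]
  have stab2 : ∀ t, i ≤ t → cpow f (t + m) = cpow f t := by
    intro t ht
    obtain ⟨s, rfl⟩ : ∃ s, t = i + s := ⟨t - i, by omega⟩
    have : i + s + m = j + s := by omega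
    rw [this, ← stab s]
  have stab3 : ∀ k t, i ≤ t → cpow f (t + k * m) = cpow f t := by
    intro k
    induction k with
    | zero => intro t ht; simp
    | succ k ih =>
        intro t ht
        have h1 : t + (k + 1) * m = (t + k * m) + m := by ring
        rw [h1, stab2 (t + k * m) (by omega), ih t ht]
  refine ⟨(i + 1) * m, by positivity, ?_⟩
  rw [← cpow_add]
  have hge : i ≤ (i + 1) * m := by nlinarith
  exact stab3 (i + 1) ((i + 1) * m) hge

lemma exists_iterate_eq_id [Finite D] {f : D → D} (hf : Function.Injective f) :
    ∃ k, 0 < k ∧ f^[k] = id := by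
  obtain ⟨i, j, hne, heq⟩ := Finite.exists_ne_map_eq_of_infinite (fun n : ℕ => f^[n])
  wlog hij : i < j generalizing i j
  · exact this j i hne.symm heq.symm (by omega)
  refine ⟨j - i, by omega, funext fun z => ?_⟩
  have h1 : f^[i] (f^[j - i] z) = f^[i] z := by
    rw [← Function.iterate_add_apply]
    have : i + (j - i) = j := by omega
    rw [this]
    exact (congrFun heq z).symm
  exact hf.iterate i h1

end Helpers

/-- The U-X-core is unique up to isomorphism: given two pairs of minimal sets
`(U₁, X₁)` and `(U₂, X₂)` (with maximal intersection) witnessed by surjective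
hyper-endomorphisms, the substructures induced by `U₁ ∪ X₁` and `U₂ ∪ X₂`
are isomorphic. -/
theorem UXcore_unique_up_to_iso {σ : Type} [Finite σ] (ar : σ → ℕ)
    {D : Type} [Finite D] [Nonempty D]
    (I : ∀ r : σ, (Fin (ar r) → D) → Prop)
    (U₁ X₁ U₂ X₂ : Set D) (h₁ h₂ : D → Set D)
    (hshe₁ : IsSHE I h₁) (hU₁ : USurjective h₁ U₁) (hX₁ : XTotal h₁ X₁)
    (hshe₂ : IsSHE I h₂) (hU₂ : USurjective h₂ U₂) (hX₂ : XTotal h₂ X₂)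
    (hUmin₁ : ∀ U : Set D, (∃ f : D → Set D, IsSHE I f ∧ USurjective f U) →
      U₁.ncard ≤ U.ncard)
    (hXmin₁ : ∀ X : Set D, (∃ f : D → Set D, IsSHE I f ∧ XTotal f X) →
      X₁.ncard ≤ X.ncard)
    (hmax₁ : ∀ U X : Set D, (∃ f : D → Set D, IsSHE I f ∧ USurjective f U) →
      (∃ f : D → Set D, IsSHE I f ∧ XTotal f X) →
      U.ncard = U₁.ncard → X.ncard = X₁.ncard →
      (U ∩ X).ncard ≤ (U₁ ∩ X₁).ncard)
    (hUmin₂ : ∀ U : Set D, (∃ f : D → Set D, IsSHE I f ∧ USurjective f U) →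
      U₂.ncard ≤ U.ncard)
    (hXmin₂ : ∀ X : Set D, (∃ f : D → Set D, IsSHE I f ∧ XTotal f X) →
      X₂.ncard ≤ X.ncard)
    (hmax₂ : ∀ U X : Set D, (∃ f : D → Set D, IsSHE I f ∧ USurjective f U) →
      (∃ f : D → Set D, IsSHE I f ∧ XTotal f X) →
      U.ncard = U₂.ncard → X.ncard = X₂.ncard →
      (U ∩ X).ncard ≤ (U₂ ∩ X₂).ncard) :
    ∃ e : ↥(U₁ ∪ X₁) ≃ ↥(U₂ ∪ X₂), ∀ (r : σ) (t : Fin (ar r) → ↥(U₁ ∪ X₁)),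
      I r (fun i => (t i : D)) ↔ I r (fun i => (e (t i) : D)) := by
  classical
  -- basic cardinalities
  have cardU : U₁.ncard = U₂.ncard :=
    le_antisymm (hUmin₁ U₂ ⟨h₂, hshe₂, hU₂⟩) (hUmin₂ U₁ ⟨h₁, hshe₁, hU₁⟩)
  have cardX : X₁.ncard = X₂.ncard :=
    le_antisymm (hXmin₁ X₂ ⟨h₂, hshe₂, hX₂⟩) (hXmin₂ X₁ ⟨h₁, hshe₁, hX₁⟩)
  have cardP : (U₁ ∩ X₁).ncard = (U₂ ∩ X₂).ncard :=
    le_antisymm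
      (hmax₂ U₁ X₁ ⟨h₁, hshe₁, hU₁⟩ ⟨h₁, hshe₁, hX₁⟩ cardU cardX)
      (hmax₁ U₂ X₂ ⟨h₂, hshe₂, hU₂⟩ ⟨h₂, hshe₂, hX₂⟩ cardU.symm cardX.symm)
  -- idempotent powers
  obtain ⟨n₁, hn₁pos, hidem₁⟩ := exists_idem_pow h₁
  obtain ⟨n₂, hn₂pos, hidem₂⟩ := exists_idem_pow h₂
  obtain ⟨m₁, rfl⟩ : ∃ m, n₁ = m + 1 := ⟨n₁ - 1, by omega⟩
  obtain ⟨m₂, rfl⟩ : ∃ m, n₂ = m + 1 := ⟨n₂ - 1, by omega⟩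
  set E₁ : D → Set D := cpow h₁ (m₁ + 1) with hE₁def
  set E₂ : D → Set D := cpow h₂ (m₂ + 1) with hE₂def
  have hE₁she : IsSHE I E₁ := isSHE_cpow hshe₁ (m₁ + 1)
  have hE₂she : IsSHE I E₂ := isSHE_cpow hshe₂ (m₂ + 1)
  have hE₁U : USurjective E₁ U₁ := usurj_cpow (I := I) hshe₁ hU₁ m₁
  have hE₂U : USurjective E₂ U₂ := usurj_cpow (I := I) hshe₂ hU₂ m₂
  have hE₁X : XTotal E₁ X₁ := xtotal_cpow (I := I) hshe₁ hX₁ m₁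
  have hE₂X : XTotal E₂ X₂ := xtotal_cpow (I := I) hshe₂ hX₂ m₂
  have hE₁i : comp E₁ E₁ = E₁ := hidem₁
  have hE₂i : comp E₂ E₂ = E₂ := hidem₂
  -- reflexivity lemmas
  have reflU : ∀ (E : D → Set D), IsSHE I E → comp E E = E → ∀ (U : Set D),
      USurjective E U →
      (∀ U', (∃ f, IsSHE I f ∧ USurjective f U') → U.ncard ≤ U'.ncard) →
      ∀ u ∈ U, u ∈ E u := by
    intro E hE hidem U hEU hmin u hu
    obtain ⟨u'', hu''U, humem⟩ := hEU u
    by_cases h : u'' = u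
    · exact h ▸ humem
    · exfalso
      have hsurj : USurjective E (U \ {u}) := by
        intro d
        obtain ⟨w, hwU, hdw⟩ := hEU d
        by_cases hw : w = u
        · refine ⟨u'', ⟨hu''U, by simpa using h⟩, ?_⟩
          rw [← hidem]
          exact ⟨u, humem, hw ▸ hdw⟩
        · exact ⟨w, ⟨hwU, by simpa using hw⟩, hdw⟩
      have h1 := hmin (U \ {u}) ⟨E, hE, hsurj⟩
      have h2 : (U \ {u}).ncard < U.ncard :=
        Set.ncard_diff_singleton_lt_of_mem hu (Set.toFinite U)
      omega
  have reflX : ∀ (E : D → Set D), IsSHE I E → comp E E = E → ∀ (X : Set D),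
      XTotal E X →
      (∀ X', (∃ f, IsSHE I f ∧ XTotal f X') → X.ncard ≤ X'.ncard) →
      ∀ x ∈ X, x ∈ E x := by
    intro E hE hidem X hEX hmin x hx
    obtain ⟨z, hzX, hzmem⟩ := hEX x
    by_cases h : z = x
    · exact h ▸ hzmem
    · exfalso
      have htot : XTotal E (X \ {x}) := by
        intro a
        obtain ⟨w, hwX, hwa⟩ := hEX a
        by_cases hw : w = x
        · refine ⟨z, ⟨hzX, by simpa using h⟩, ?_⟩
          rw [← hidem]
          exact ⟨x, hw ▸ hwa, hzmem⟩
        · exact ⟨w, ⟨hwX, by simpa using hw⟩, hwa⟩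
      have h1 := hmin (X \ {x}) ⟨E, hE, htot⟩
      have h2 : (X \ {x}).ncard < X.ncard :=
        Set.ncard_diff_singleton_lt_of_mem hx (Set.toFinite X)
      omega
  have reflE₁U₁ : ∀ u ∈ U₁, u ∈ E₁ u := reflU E₁ hE₁she hE₁i U₁ hE₁U hUmin₁
  have reflE₁X₁ : ∀ x ∈ X₁, x ∈ E₁ x := reflX E₁ hE₁she hE₁i X₁ hE₁X hXmin₁
  have reflE₂U₂ : ∀ u ∈ U₂, u ∈ E₂ u := reflU E₂ hE₂she hE₂i U₂ hE₂U hUmin₂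
  have reflE₂X₂ : ∀ x ∈ X₂, x ∈ E₂ x := reflX E₂ hE₂she hE₂i X₂ hE₂X hXmin₂

  -- covariant injectivity over minimal total sets
  have covInj1 : ∀ (c : D → Set D), IsSHE I c → ∀ (s : D → D),
      (∀ x ∈ X₁, s x ∈ c x) → Set.InjOn s X₁ := by
    intro c hc s hs x hx x' hx' heq
    by_contra hne
    have htot : XTotal (comp c E₁) (s '' X₁) := by
      intro a
      obtain ⟨x₀, hx₀X, hx₀E⟩ := hE₁X a
      exact ⟨s x₀, Set.mem_image_of_mem _ hx₀X, x₀, hx₀E, hs _ hx₀X⟩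
    have h1 : X₂.ncard ≤ (s '' X₁).ncard :=
      hXmin₂ _ ⟨comp c E₁, isSHE_comp hc hE₁she, htot⟩
    have himg : s '' X₁ ⊆ s '' (X₁ \ {x'}) := by
      rintro z ⟨w, hw, rfl⟩
      by_cases hwx : w = x'
      · exact ⟨x, ⟨hx, by simpa using hne⟩, by rw [hwx, ← heq]⟩
      · exact ⟨w, ⟨hw, by simpa using hwx⟩, rfl⟩
    have h2 : (s '' X₁).ncard ≤ (X₁ \ {x'}).ncard :=
      le_trans (Set.ncard_le_ncard himg (Set.toFinite _)) (Set.ncard_image_le (Set.toFinite _))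
    have h3 : (X₁ \ {x'}).ncard < X₁.ncard :=
      Set.ncard_diff_singleton_lt_of_mem hx' (Set.toFinite _)
    omega
  have covInj2 : ∀ (c : D → Set D), IsSHE I c → ∀ (s : D → D),
      (∀ x ∈ X₂, s x ∈ c x) → Set.InjOn s X₂ := by
    intro c hc s hs x hx x' hx' heq
    by_contra hne
    have htot : XTotal (comp c E₂) (s '' X₂) := by
      intro a
      obtain ⟨x₀, hx₀X, hx₀E⟩ := hE₂X a
      exact ⟨s x₀, Set.mem_image_of_mem _ hx₀X, x₀, hx₀E, hs _ hx₀X⟩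
    have h1 : X₁.ncard ≤ (s '' X₂).ncard :=
      hXmin₁ _ ⟨comp c E₂, isSHE_comp hc hE₂she, htot⟩
    have himg : s '' X₂ ⊆ s '' (X₂ \ {x'}) := by
      rintro z ⟨w, hw, rfl⟩
      by_cases hwx : w = x'
      · exact ⟨x, ⟨hx, by simpa using hne⟩, by rw [hwx, ← heq]⟩
      · exact ⟨w, ⟨hw, by simpa using hwx⟩, rfl⟩
    have h2 : (s '' X₂).ncard ≤ (X₂ \ {x'}).ncard :=
      le_trans (Set.ncard_le_ncard himg (Set.toFinite _)) (Set.ncard_image_le (Set.toFinite _))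
    have h3 : (X₂ \ {x'}).ncard < X₂.ncard :=
      Set.ncard_diff_singleton_lt_of_mem hx' (Set.toFinite _)
    omega
  -- contravariant injectivity over minimal surjective sets
  have conInj2 : ∀ (c : D → Set D), IsSHE I c → ∀ (r : D → D),
      (∀ v ∈ U₂, v ∈ c (r v)) → Set.InjOn r U₂ := by
    intro c hc r hr v hv v' hv' heq
    by_contra hne
    have hsurj : USurjective (comp E₂ c) (r '' U₂) := by
      intro d
      obtain ⟨w, hwU, hdw⟩ := hE₂U d
      exact ⟨r w, Set.mem_image_of_mem _ hwU, w, hr w hwU, hdw⟩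
    have h1 : U₁.ncard ≤ (r '' U₂).ncard :=
      hUmin₁ _ ⟨comp E₂ c, isSHE_comp hE₂she hc, hsurj⟩
    have himg : r '' U₂ ⊆ r '' (U₂ \ {v'}) := by
      rintro z ⟨w, hw, rfl⟩
      by_cases hwx : w = v'
      · exact ⟨v, ⟨hv, by simpa using hne⟩, by rw [hwx, ← heq]⟩
      · exact ⟨w, ⟨hw, by simpa using hwx⟩, rfl⟩
    have h2 : (r '' U₂).ncard ≤ (U₂ \ {v'}).ncard :=
      le_trans (Set.ncard_le_ncard himg (Set.toFinite _)) (Set.ncard_image_le (Set.toFinite _))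
    have h3 : (U₂ \ {v'}).ncard < U₂.ncard :=
      Set.ncard_diff_singleton_lt_of_mem hv' (Set.toFinite _)
    omega
  have conInj1 : ∀ (c : D → Set D), IsSHE I c → ∀ (r : D → D),
      (∀ v ∈ U₁, v ∈ c (r v)) → Set.InjOn r U₁ := by
    intro c hc r hr v hv v' hv' heq
    by_contra hne
    have hsurj : USurjective (comp E₁ c) (r '' U₁) := by
      intro d
      obtain ⟨w, hwU, hdw⟩ := hE₁U d
      exact ⟨r w, Set.mem_image_of_mem _ hwU, w, hr w hwU, hdw⟩
    have h1 : U₂.ncard ≤ (r '' U₁).ncard :=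
      hUmin₂ _ ⟨comp E₁ c, isSHE_comp hE₁she hc, hsurj⟩
    have himg : r '' U₁ ⊆ r '' (U₁ \ {v'}) := by
      rintro z ⟨w, hw, rfl⟩
      by_cases hwx : w = v'
      · exact ⟨v, ⟨hv, by simpa using hne⟩, by rw [hwx, ← heq]⟩
      · exact ⟨w, ⟨hw, by simpa using hwx⟩, rfl⟩
    have h2 : (r '' U₁).ncard ≤ (U₁ \ {v'}).ncard :=
      le_trans (Set.ncard_le_ncard himg (Set.toFinite _)) (Set.ncard_image_le (Set.toFinite _))
    have h3 : (U₁ \ {v'}).ncard < U₁.ncard :=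
      Set.ncard_diff_singleton_lt_of_mem hv' (Set.toFinite _)
    omega

  -- the contravariant source map r₀ : for each v, a source in U₁ with v ∈ E₁ (r₀ v)
  have srcNE : ∀ v : D, ∃ w, w ∈ U₁ ∧ v ∈ E₁ w := by
    intro v; obtain ⟨u, hu, hv⟩ := hE₁U v; exact ⟨u, hu, hv⟩
  choose r₀ r₀U r₀mem using srcNE
  have r₀inj : Set.InjOn r₀ U₂ := conInj2 E₁ hE₁she r₀ (fun v _ => r₀mem v)
  have r₀img : r₀ '' U₂ = U₁ := by
    refine Set.eq_of_subset_of_ncard_le ?_ ?_ (Set.toFinite _)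
    · rintro z ⟨v, hv, rfl⟩; exact r₀U v
    · rw [Set.ncard_image_of_injOn r₀inj, cardU]
  -- covariant map μ : U₁ → U₂ with μ u ∈ E₁ u
  have μex : ∀ u : D, ∃ v, u ∈ U₁ → v ∈ U₂ ∧ v ∈ E₁ u := by
    intro u
    by_cases hu : u ∈ U₁
    · have : u ∈ r₀ '' U₂ := r₀img ▸ hu
      obtain ⟨v, hv, hvu⟩ := this
      exact ⟨v, fun _ => ⟨hv, hvu ▸ r₀mem v⟩⟩
    · exact ⟨u, fun h => absurd h hu⟩
  choose μ hμ using μex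
  have μU₂ : ∀ u ∈ U₁, μ u ∈ U₂ := fun u hu => (hμ u hu).1
  have μmem : ∀ u ∈ U₁, μ u ∈ E₁ u := fun u hu => (hμ u hu).2
  have μinj : Set.InjOn μ U₁ := by
    intro u hu u' hu' heq
    by_contra hne
    have hvU₂ : μ u ∈ U₂ := μU₂ u hu
    have hvmem : μ u ∈ E₁ u := μmem u hu
    have hvmem' : μ u ∈ E₁ u' := heq ▸ μmem u' hu'
    set v := μ u with hvdef
    set r' : D → D := fun w => if w = v then u else r₀ w with hr'
    have r'spec : ∀ w ∈ U₂, w ∈ E₁ (r' w) := by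
      intro w hw
      by_cases h : w = v
      · rw [hr']; simp only [if_pos h]; exact h ▸ hvmem
      · rw [hr']; simp only [if_neg h]; exact r₀mem w
    have r'inj : Set.InjOn r' U₂ := conInj2 E₁ hE₁she r' r'spec
    have r'U₁ : ∀ w, r' w ∈ U₁ := by
      intro w
      by_cases h : w = v
      · rw [hr']; simp only [if_pos h]; exact hu
      · rw [hr']; simp only [if_neg h]; exact r₀U w
    have r'img : r' '' U₂ = U₁ := by
      refine Set.eq_of_subset_of_ncard_le ?_ ?_ (Set.toFinite _)
      · rintro z ⟨w, hw, rfl⟩; exact r'U₁ w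
      · rw [Set.ncard_image_of_injOn r'inj, cardU]
    have : u' ∈ r' '' U₂ := r'img ▸ hu'
    obtain ⟨vt, hvtU₂, hvt⟩ := this
    have hvtne : vt ≠ v := by
      intro h
      rw [h, hr'] at hvt
      simp only [if_pos rfl] at hvt
      exact hne hvt
    have hr₀vt : r₀ vt = u' := by
      rw [hr'] at hvt; simpa only [if_neg hvtne] using hvt
    have hvtmem : vt ∈ E₁ u' := hr₀vt ▸ r₀mem vt
    set r2 : D → D := fun w => if w = v then u' else r₀ w with hr2
    have r2spec : ∀ w ∈ U₂, w ∈ E₁ (r2 w) := by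
      intro w hw
      by_cases h : w = v
      · rw [hr2]; simp only [if_pos h]; exact h ▸ hvmem'
      · rw [hr2]; simp only [if_neg h]; exact r₀mem w
    have r2inj : Set.InjOn r2 U₂ := conInj2 E₁ hE₁she r2 r2spec
    have heq2 : r2 v = r2 vt := by
      rw [hr2]; simp only [if_pos rfl, if_neg hvtne]; exact hr₀vt.symm
    exact hvtne (r2inj hvtU₂ hvU₂ heq2.symm)
  -- contravariant map δ : with u ∈ E₂ (δ u), δ u ∈ U₂
  have snkNE : ∀ u : D, ∃ v, v ∈ U₂ ∧ u ∈ E₂ v := by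
    intro u; obtain ⟨v, hv, hu⟩ := hE₂U u; exact ⟨v, hv, hu⟩
  choose δ δU₂ δmem using snkNE
  have δinj : Set.InjOn δ U₁ := conInj1 E₂ hE₂she δ (fun u _ => δmem u)
  have δimg : δ '' U₁ = U₂ := by
    refine Set.eq_of_subset_of_ncard_le ?_ ?_ (Set.toFinite _)
    · rintro z ⟨u, hu, rfl⟩; exact δU₂ u
    · rw [Set.ncard_image_of_injOn δinj, cardU]
  -- ν : inverse of δ on U₂
  have νex : ∀ v : D, ∃ u, v ∈ U₂ → u ∈ U₁ ∧ δ u = v := by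
    intro v
    by_cases hv : v ∈ U₂
    · have : v ∈ δ '' U₁ := δimg ▸ hv
      obtain ⟨u, hu, hud⟩ := this
      exact ⟨u, fun _ => ⟨hu, hud⟩⟩
    · exact ⟨v, fun h => absurd h hv⟩
  choose ν hν using νex
  have νU₁ : ∀ v ∈ U₂, ν v ∈ U₁ := fun v hv => (hν v hv).1
  have νδ : ∀ v ∈ U₂, δ (ν v) = v := fun v hv => (hν v hv).2
  have νmem : ∀ v ∈ U₂, ν v ∈ E₂ v := by
    intro v hv
    have := δmem (ν v)
    rwa [νδ v hv] at this
  have νinj : Set.InjOn ν U₂ := by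
    intro v hv v' hv' h
    rw [← νδ v hv, ← νδ v' hv', h]
  -- covariant map β with β z ∈ E₂ z ∩ X₂
  choose β βX₂ βmem using fun z => hE₂X z
  have βinj : Set.InjOn β X₁ := covInj1 E₂ hE₂she β (fun x _ => βmem x)
  -- covariant map ς with ς z ∈ E₁ z ∩ X₁
  choose ς ςX₁ ςmem using fun z => hE₁X z
  have ςinj : Set.InjOn ς X₂ := covInj2 E₁ hE₁she ς (fun y _ => ςmem y)

  -- the map Θ
  set Θ : D → D := fun z => if z ∈ U₁ then μ z else β z with hΘ
  have Θmem : ∀ z ∈ X₁, Θ z ∈ comp E₂ E₁ z := by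
    intro z hz
    by_cases hzU : z ∈ U₁
    · rw [hΘ]; simp only [if_pos hzU]
      exact ⟨μ z, μmem z hzU, reflE₂U₂ (μ z) (μU₂ z hzU)⟩
    · rw [hΘ]; simp only [if_neg hzU]
      exact ⟨z, reflE₁X₁ z hz, βmem z⟩
  have ΘinjX : Set.InjOn Θ X₁ := covInj1 (comp E₂ E₁) (isSHE_comp hE₂she hE₁she) Θ Θmem
  -- the key lemma: β never sends X₁ \ U₁ into U₂
  have Cβ : ∀ x ∈ X₁, x ∉ U₁ → β x ∉ U₂ := by
    intro x hxX hxU hβU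
    set Xs := Θ '' X₁ with hXs
    have hXstot : XTotal (comp (comp E₂ E₁) E₁) Xs := by
      intro a
      obtain ⟨x₀, h1, h2⟩ := hE₁X a
      exact ⟨Θ x₀, Set.mem_image_of_mem _ h1, x₀, h2, Θmem x₀ h1⟩
    have hXscard : Xs.ncard = X₂.ncard := by
      rw [hXs, Set.ncard_image_of_injOn ΘinjX, cardX]
    have hb := hmax₂ U₂ Xs ⟨h₂, hshe₂, hU₂⟩
      ⟨comp (comp E₂ E₁) E₁, isSHE_comp (isSHE_comp hE₂she hE₁she) hE₁she, hXstot⟩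
      rfl hXscard
    have hsub : insert (β x) (μ '' (U₁ ∩ X₁)) ⊆ U₂ ∩ Xs := by
      rintro z hz
      rcases Set.mem_insert_iff.mp hz with rfl | ⟨u, ⟨huU, huX⟩, rfl⟩
      · refine ⟨hβU, x, hxX, ?_⟩
        rw [hΘ]; simp only [if_neg hxU]
      · refine ⟨μU₂ u huU, u, huX, ?_⟩
        rw [hΘ]; simp only [if_pos huU]
    have hnotmem : β x ∉ μ '' (U₁ ∩ X₁) := by
      rintro ⟨u, ⟨huU, huX⟩, hequ⟩
      have h1 : Θ x = Θ u := by
        rw [hΘ]; simp only [if_neg hxU, if_pos huU]; exact hequ.symm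
      exact hxU ((ΘinjX hxX huX h1) ▸ huU)
    have h1 : (insert (β x) (μ '' (U₁ ∩ X₁))).ncard = (μ '' (U₁ ∩ X₁)).ncard + 1 :=
      Set.ncard_insert_of_notMem hnotmem (Set.toFinite _)
    have h2 : (μ '' (U₁ ∩ X₁)).ncard = (U₁ ∩ X₁).ncard :=
      Set.ncard_image_of_injOn (μinj.mono Set.inter_subset_left)
    have h3 : (insert (β x) (μ '' (U₁ ∩ X₁))).ncard ≤ (U₂ ∩ Xs).ncard :=
      Set.ncard_le_ncard hsub (Set.toFinite _)
    omega
  -- Θ is injective on S₁ and maps into S₂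
  have ΘS₂ : ∀ z ∈ U₁ ∪ X₁, Θ z ∈ U₂ ∪ X₂ := by
    intro z hz
    by_cases h : z ∈ U₁
    · rw [hΘ]; simp only [if_pos h]; exact Or.inl (μU₂ z h)
    · rw [hΘ]; simp only [if_neg h]; exact Or.inr (βX₂ z)
  have ΘinjS : Set.InjOn Θ (U₁ ∪ X₁) := by
    intro z hz z' hz' heq
    have hzX : z ∉ U₁ → z ∈ X₁ := fun h => hz.resolve_left h
    have hz'X : z' ∉ U₁ → z' ∈ X₁ := fun h => hz'.resolve_left h
    by_cases h : z ∈ U₁ <;> by_cases h' : z' ∈ U₁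
    · refine μinj h h' ?_
      rw [hΘ] at heq; simpa only [if_pos h, if_pos h'] using heq
    · exfalso
      rw [hΘ] at heq; simp only [if_pos h, if_neg h'] at heq
      exact Cβ z' (hz'X h') h' (heq ▸ μU₂ z h)
    · exfalso
      rw [hΘ] at heq; simp only [if_neg h, if_pos h'] at heq
      exact Cβ z (hzX h) h (heq.symm ▸ μU₂ z' h')
    · refine βinj (hzX h) (hz'X h') ?_
      rw [hΘ] at heq; simpa only [if_neg h, if_neg h'] using heq
  have cardS : (U₁ ∪ X₁).ncard = (U₂ ∪ X₂).ncard := by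
    have e1 := Set.ncard_union_add_ncard_inter U₁ X₁ (Set.toFinite _) (Set.toFinite _)
    have e2 := Set.ncard_union_add_ncard_inter U₂ X₂ (Set.toFinite _) (Set.toFinite _)
    omega

  -- the twist permutations
  set χb : D → D := fun z => if z ∈ X₁ then ς (β z) else z with hχb
  set ρb : D → D := fun z => if z ∈ U₁ then ν (μ z) else z with hρb
  have χbX : ∀ z ∈ X₁, χb z ∈ X₁ := by
    intro z hz; rw [hχb]; simp only [if_pos hz]; exact ςX₁ (β z)
  have ρbU : ∀ z ∈ U₁, ρb z ∈ U₁ := by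
    intro z hz; rw [hρb]; simp only [if_pos hz]; exact νU₁ (μ z) (μU₂ z hz)
  have χbXm : ∀ (m : ℕ) (z : D), z ∈ X₁ → χb^[m] z ∈ X₁ := by
    intro m
    induction m with
    | zero => intro z hz; simpa using hz
    | succ p ih =>
        intro z hz
        rw [Function.iterate_succ_apply']
        exact χbX _ (ih z hz)
  have ρbUm : ∀ (m : ℕ) (z : D), z ∈ U₁ → ρb^[m] z ∈ U₁ := by
    intro m
    induction m with
    | zero => intro z hz; simpa using hz
    | succ p ih =>
        intro z hz
        rw [Function.iterate_succ_apply']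
        exact ρbU _ (ih z hz)
  have χbinj : Function.Injective χb := by
    intro z z' h
    by_cases hz : z ∈ X₁ <;> by_cases hz' : z' ∈ X₁
    · rw [hχb] at h; simp only [if_pos hz, if_pos hz'] at h
      exact βinj hz hz' (ςinj (βX₂ z) (βX₂ z') h)
    · exfalso
      rw [hχb] at h; simp only [if_pos hz, if_neg hz'] at h
      exact hz' (h ▸ ςX₁ (β z))
    · exfalso
      rw [hχb] at h; simp only [if_neg hz, if_pos hz'] at h
      exact hz (by rw [h]; exact ςX₁ (β z'))
    · rw [hχb] at h; simpa only [if_neg hz, if_neg hz'] using h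
  have ρbinj : Function.Injective ρb := by
    intro z z' h
    by_cases hz : z ∈ U₁ <;> by_cases hz' : z' ∈ U₁
    · rw [hρb] at h; simp only [if_pos hz, if_pos hz'] at h
      exact μinj hz hz' (νinj (μU₂ z hz) (μU₂ z' hz') h)
    · exfalso
      rw [hρb] at h; simp only [if_pos hz, if_neg hz'] at h
      exact hz' (h ▸ νU₁ (μ z) (μU₂ z hz))
    · exfalso
      rw [hρb] at h; simp only [if_neg hz, if_pos hz'] at h
      exact hz (by rw [h]; exact νU₁ (μ z') (μU₂ z' hz'))
    · rw [hρb] at h; simpa only [if_neg hz, if_neg hz'] using h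
  obtain ⟨k₁, hk₁pos, hk₁⟩ := exists_iterate_eq_id χbinj
  obtain ⟨k₂, hk₂pos, hk₂⟩ := exists_iterate_eq_id ρbinj
  set k := k₁ * k₂ with hkdef
  have hkpos : 0 < k := Nat.mul_pos hk₁pos hk₂pos
  have hχk : ∀ z, χb^[k] z = z := by
    intro z
    rw [hkdef, Function.iterate_mul, hk₁, Function.iterate_id]
    rfl
  have hρk : ∀ z, ρb^[k] z = z := by
    intro z
    rw [hkdef, Nat.mul_comm, Function.iterate_mul, hk₂, Function.iterate_id]
    rfl
  -- the master equivalence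
  have master : ∀ (r : σ) (t : Fin (ar r) → D), (∀ i, t i ∈ U₁ ∪ X₁) →
      (I r t ↔ I r fun i => Θ (t i)) := by
    intro r t hT
    have hXmem : ∀ i, t i ∉ U₁ → t i ∈ X₁ := fun i h => (hT i).resolve_left h
    set A : ℕ → Fin (ar r) → D :=
      fun m i => if t i ∈ U₁ then ρb^[m] (t i) else χb^[m] (t i) with hA
    set B : ℕ → Fin (ar r) → D :=
      fun m i => if t i ∈ U₁ then μ (ρb^[m] (t i)) else β (χb^[m] (t i)) with hB
    have step1 : ∀ m, I r (A m) → I r (B m) := by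
      intro m h
      have mid : I r fun i => if t i ∈ U₁ then μ (ρb^[m] (t i)) else χb^[m] (t i) := by
        refine hE₁she.2.2 r (A m) h _ fun i => ?_
        by_cases hi : t i ∈ U₁
        · rw [hA]; simp only [if_pos hi]
          exact μmem _ (ρbUm m _ hi)
        · rw [hA]; simp only [if_neg hi]
          exact reflE₁X₁ _ (χbXm m _ (hXmem i hi))
      refine hE₂she.2.2 r _ mid (B m) fun i => ?_
      by_cases hi : t i ∈ U₁
      · rw [hB]; simp only [if_pos hi]
        exact reflE₂U₂ _ (μU₂ _ (ρbUm m _ hi))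
      · rw [hB]; simp only [if_neg hi]
        exact βmem _
    have step2 : ∀ m, I r (B m) → I r (A (m + 1)) := by
      intro m h
      have mid : I r fun i => if t i ∈ U₁ then ν (μ (ρb^[m] (t i))) else β (χb^[m] (t i)) := by
        refine hE₂she.2.2 r (B m) h _ fun i => ?_
        by_cases hi : t i ∈ U₁
        · rw [hB]; simp only [if_pos hi]
          exact νmem _ (μU₂ _ (ρbUm m _ hi))
        · rw [hB]; simp only [if_neg hi]
          exact reflE₂X₂ _ (βX₂ _)
      refine hE₁she.2.2 r _ mid (A (m + 1)) fun i => ?_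
      by_cases hi : t i ∈ U₁
      · rw [hA]; simp only [if_pos hi, Function.iterate_succ_apply']
        have hw : ρb (ρb^[m] (t i)) = ν (μ (ρb^[m] (t i))) := by
          rw [hρb]; exact if_pos (ρbUm m _ hi)
        rw [hw]
        exact reflE₁U₁ _ (νU₁ _ (μU₂ _ (ρbUm m _ hi)))
      · rw [hA]; simp only [if_neg hi, Function.iterate_succ_apply']
        have hw : χb (χb^[m] (t i)) = ς (β (χb^[m] (t i))) := by
          rw [hχb]; exact if_pos (χbXm m _ (hXmem i hi))
        rw [hw]
        exact ςmem _
    have hA0 : A 0 = t := by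
      funext i
      by_cases hi : t i ∈ U₁ <;> rw [hA] <;> simp [hi]
    have hAk : A k = t := by
      funext i
      by_cases hi : t i ∈ U₁ <;> rw [hA] <;> simp [hi, hχk, hρk]
    have hB0 : (fun i => Θ (t i)) = B 0 := by
      funext i
      by_cases hi : t i ∈ U₁ <;> rw [hB, hΘ] <;> simp [hi]
    constructor
    · intro h
      rw [hB0]
      exact step1 0 (hA0 ▸ h)
    · intro h
      rw [hB0] at h
      have chain : ∀ m, I r (A (m + 1)) := by
        intro m
        induction m with
        | zero => exact step2 0 h
        | succ p ih => exact step2 (p + 1) (step1 (p + 1) ih)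
      have hc := chain (k - 1)
      have hkk : k - 1 + 1 = k := by omega
      rw [hkk, hAk] at hc
      exact hc
  -- the equivalence
  set F : ↥(U₁ ∪ X₁) → ↥(U₂ ∪ X₂) := fun z => ⟨Θ z.1, ΘS₂ z.1 z.2⟩ with hF
  have Finj : Function.Injective F := by
    intro a b hab
    exact Subtype.ext (ΘinjS a.2 b.2 (congrArg Subtype.val hab))
  have Fbij : Function.Bijective F := by
    rw [Nat.bijective_iff_injective_and_card]
    refine ⟨Finj, ?_⟩
    rw [Nat.card_coe_set_eq, Nat.card_coe_set_eq]
    exact cardS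
  refine ⟨Equiv.ofBijective F Fbij, ?_⟩
  intro r t
  exact master r (fun i => (t i : D)) (fun i => (t i).2)

end MC
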